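/- Let P_n be the path on n ≥ 2 vertices. Then mag^-(P_n) = 2 and mag^+(P_n) = n. -/
import Mathlib


namespace MAG

variable {V : Type*}

/-- Directed walk from `x` to `y` whose list of visited vertices is `l`. -/
inductive DWalk (A : V → V → Prop) : V → V → List V → Prop
  | nil (v : V) : DWalk A v v [v]
  | cons {u v w : V} {l : List V} (h : A u v) (p : DWalk A v w l) :
      DWalk A u w (u :: l)

/-- The arc `(a, b)` lies on the walk with vertex list `l`. -/
def ArcOn (a b : V) (l : List V) : Prop :=
  ∃ l₁ l₂ : List V, l = l₁ ++ a :: b :: l₂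

/-- `l` is (the vertex list of) a shortest directed walk from `x` to `y`. -/
def IsShortest (A : V → V → Prop) (x y : V) (l : List V) : Prop :=
  DWalk A x y l ∧ ∀ l' : List V, DWalk A x y l' → l.length ≤ l'.length

/-- `x` and `y` monitor the arc `(a, b)`: the arc lies on every shortest
directed path from `x` to `y` (and such a path exists), or symmetrically
from `y` to `x`. -/
def Monitors (A : V → V → Prop) (x y a b : V) : Prop :=
  ((∃ l, IsShortest A x y l) ∧ ∀ l, IsShortest A x y l → ArcOn a b l) ∨
  ((∃ l, IsShortest A y x l) ∧ ∀ l, IsShortest A y x l → ArcOn a b l)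

/-- A monitoring arc-geodetic set of the digraph `A`. -/
def IsMAGSet (A : V → V → Prop) (M : Set V) : Prop :=
  ∀ a b : V, A a b → ∃ x ∈ M, ∃ y ∈ M, x ≠ y ∧ Monitors A x y a b

/-- The monitoring arc-geodetic number of the digraph `A`. -/
noncomputable def mag (A : V → V → Prop) [Fintype V] : ℕ :=
  sInf {n | ∃ M : Finset V, IsMAGSet A (M : Set V) ∧ M.card = n}

/-- `A` is an orientation of the undirected simple graph `G`. -/
structure IsOrientation (G : SimpleGraph V) (A : V → V → Prop) : Prop where
  adj_iff : ∀ u v : V, G.Adj u v ↔ (A u v ∨ A v u)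
  asymm : ∀ u v : V, A u v → ¬ A v u

/-- The lower monitoring arc-geodetic number of `G`. -/
noncomputable def magMinus (G : SimpleGraph V) [Fintype V] : ℕ :=
  sInf {n | ∃ A : V → V → Prop, IsOrientation G A ∧ mag A = n}

/-- The upper monitoring arc-geodetic number of `G`. -/
noncomputable def magPlus (G : SimpleGraph V) [Fintype V] : ℕ :=
  sSup {n | ∃ A : V → V → Prop, IsOrientation G A ∧ mag A = n}

/-- A source: a vertex with no in-neighbours. -/
def IsSource (A : V → V → Prop) (v : V) : Prop := ∀ w, ¬ A w v

/-- A sink: a vertex with no out-neighbours. -/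
def IsSink (A : V → V → Prop) (v : V) : Prop := ∀ w, ¬ A v w

/-- An oriented graph: no loops and no pair of opposite arcs. -/
def IsOrientedGraph (A : V → V → Prop) : Prop :=
  (∀ v, ¬ A v v) ∧ ∀ u v : V, A u v → ¬ A v u

/-- The underlying undirected graph of `A` is connected. -/
def IsConnectedDigraph (A : V → V → Prop) : Prop :=
  ∀ x y : V, Relation.ReflTransGen (fun a b => A a b ∨ A b a) x y


section Helpers

lemma DWalk.ne_nil {A : V → V → Prop} {x y : V} {l : List V} (p : DWalk A x y l) :
    l ≠ [] := by cases p <;> simp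

lemma DWalk.head_eq {A : V → V → Prop} {x y : V} {l : List V} (p : DWalk A x y l) :
    ∃ t, l = x :: t := by cases p <;> exact ⟨_, rfl⟩

lemma dwalk_singleton {A : V → V → Prop} {x y v : V} (p : DWalk A x y [v]) :
    x = y ∧ v = x := by
  cases p with
  | nil => exact ⟨rfl, rfl⟩
  | cons h q => exact absurd rfl q.ne_nil

lemma dwalk_pair {A : V → V → Prop} {x y u v : V} (p : DWalk A x y [u, v]) :
    u = x ∧ v = y ∧ A x y := by
  cases p with
  | cons h q =>
    obtain ⟨h1, h2⟩ := dwalk_singleton q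
    subst h1; subst h2
    exact ⟨rfl, rfl, h⟩

lemma monitors_self {A : V → V → Prop} {a b : V} (hab : A a b) (hne : a ≠ b) :
    Monitors A a b a b := by
  left
  have hw : DWalk A a b [a, b] := DWalk.cons hab (DWalk.nil b)
  have hmin : ∀ l : List V, DWalk A a b l → 2 ≤ l.length := by
    intro l hl
    match l with
    | [] => exact absurd rfl hl.ne_nil
    | [v] => exact absurd (dwalk_singleton hl).1 hne
    | (u :: v :: t) => simp
  refine ⟨⟨[a, b], hw, fun l' hl' => hmin l' hl'⟩, ?_⟩
  rintro l ⟨hl, hmin'⟩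
  have h2 : l.length = 2 := le_antisymm (hmin' [a, b] hw) (hmin l hl)
  match l, h2 with
  | [u, v], _ =>
    obtain ⟨hu, hv, -⟩ := dwalk_pair hl
    exact ⟨[], [], by simp [hu, hv]⟩

lemma isMAGSet_univ [Fintype V] {A : V → V → Prop} (hne : ∀ a b, A a b → a ≠ b) :
    IsMAGSet A (↑(Finset.univ : Finset V)) := fun a b hab =>
  ⟨a, by simp, b, by simp, hne a b hab, monitors_self hab (hne a b hab)⟩

lemma mag_le_card [Fintype V] {A : V → V → Prop} (hne : ∀ a b, A a b → a ≠ b) :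
    mag A ≤ Fintype.card V :=
  Nat.sInf_le ⟨Finset.univ, isMAGSet_univ hne, Finset.card_univ⟩

lemma two_le_mag [Fintype V] {A : V → V → Prop} (hne : ∀ a b, A a b → a ≠ b)
    {a b : V} (hab : A a b) : 2 ≤ mag A := by
  unfold mag
  apply le_csInf
  · exact ⟨Fintype.card V, Finset.univ, isMAGSet_univ hne, Finset.card_univ⟩
  rintro m ⟨M, hM, rfl⟩
  obtain ⟨x, hx, y, hy, hxy, -⟩ := hM a b hab
  exact Finset.one_lt_card.mpr ⟨x, hx, y, hy, hxy⟩

/-- Forward orientation of the path. -/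
def Afwd (n : ℕ) : Fin n → Fin n → Prop := fun u v => u.val + 1 = v.val

lemma fwd_length {n : ℕ} {x y : Fin n} {l : List (Fin n)} (p : DWalk (Afwd n) x y l) :
    x.val + l.length = y.val + 1 := by
  induction p with
  | nil v => simp
  | cons h q ih => simp only [Afwd] at h; simp only [List.length_cons]; omega

lemma fwd_no_loop {n : ℕ} {x : Fin n} {l : List (Fin n)} (p : DWalk (Afwd n) x x l) :
    l = [x] := by
  cases p with
  | nil => rfl
  | @cons _ v _ t h r =>
    exfalso
    have hr := fwd_length r
    have h1 : x.val + 1 = v.val := h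
    have h2 := List.length_pos_iff.mpr r.ne_nil
    omega

lemma fwd_unique {n : ℕ} {x y : Fin n} {l l' : List (Fin n)}
    (p : DWalk (Afwd n) x y l) (q : DWalk (Afwd n) x y l') : l = l' := by
  induction p generalizing l' with
  | nil v => rw [fwd_no_loop q]
  | @cons u v w t h r ih =>
    cases q with
    | nil =>
      have ht : t = [] := by simpa using fwd_no_loop (DWalk.cons h r)
      exact absurd ht r.ne_nil
    | @cons _ v' _ t' h' r' =>
      have h1 : u.val + 1 = v.val := h
      have h2 : u.val + 1 = v'.val := h'
      have hv : v' = v := Fin.val_injective (by omega)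
      subst hv
      rw [ih r']

lemma fwd_exists {n : ℕ} : ∀ (d : ℕ) (x y : Fin n), x.val + d = y.val →
    ∃ l, DWalk (Afwd n) x y l ∧
      ∀ a b : Fin n, Afwd n a b → x.val ≤ a.val → b.val ≤ y.val → ArcOn a b l := by
  intro d
  induction d with
  | zero =>
    intro x y hxy
    have hxy' : x = y := Fin.val_injective (by omega)
    subst hxy'
    refine ⟨[x], DWalk.nil x, ?_⟩
    intro a b hab ha hb
    exfalso
    have hab' : a.val + 1 = b.val := hab
    omega
  | succ d ih =>
    intro x y hxy
    have hx1 : x.val + 1 < n := by omega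
    set x' : Fin n := ⟨x.val + 1, hx1⟩ with hx'
    obtain ⟨l, hl, harc⟩ := ih x' y (by simp only [hx', Fin.val_mk]; omega)
    obtain ⟨t, ht⟩ := hl.head_eq
    refine ⟨x :: l, DWalk.cons (show Afwd n x x' from rfl) hl, ?_⟩
    intro a b hab ha hb
    rcases eq_or_lt_of_le ha with hax | hax
    · have ha' : a = x := Fin.val_injective hax.symm
      have hb' : b = x' := Fin.val_injective (by
        have hab' : a.val + 1 = b.val := hab
        simp only [hx', Fin.val_mk]
        omega)
      exact ⟨[], t, by simp [ht, ha', hb']⟩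
    · obtain ⟨l₁, l₂, h12⟩ := harc a b hab (by simp only [hx', Fin.val_mk]; omega) hb
      exact ⟨x :: l₁, l₂, by simp [h12]⟩

lemma fwd_ne {n : ℕ} : ∀ a b : Fin n, Afwd n a b → a ≠ b := by
  intro a b h heq
  subst heq
  simp only [Afwd] at h
  omega

lemma fwd_mag {n : ℕ} (hn : 2 ≤ n) : mag (Afwd n) = 2 := by
  have h0 : (0 : ℕ) < n := by omega
  have h1 : (1 : ℕ) < n := by omega
  have hlast : n - 1 < n := by omega
  set v0 : Fin n := ⟨0, h0⟩
  set vl : Fin n := ⟨n - 1, hlast⟩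
  have hne : v0 ≠ vl := by
    intro h
    have := congrArg Fin.val h
    simp [v0, vl] at this
    omega
  apply le_antisymm
  · apply Nat.sInf_le
    refine ⟨{v0, vl}, ?_, Finset.card_pair hne⟩
    intro a b hab
    refine ⟨v0, by simp, vl, by simp, hne, ?_⟩
    left
    obtain ⟨l, hl, harc⟩ := fwd_exists (n - 1) v0 vl (by simp only [v0, vl, Fin.val_mk]; omega)
    refine ⟨⟨l, hl, fun l' hl' => le_of_eq (by rw [fwd_unique hl hl'])⟩, ?_⟩
    rintro l' ⟨hl', -⟩
    rw [← fwd_unique hl hl']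
    refine harc a b hab (by simp only [v0, Fin.val_mk]; omega) ?_
    have := b.isLt
    simp only [vl, Fin.val_mk]
    omega
  · exact two_le_mag fwd_ne (show Afwd n v0 ⟨1, h1⟩ from rfl)

/-- Alternating orientation of the path: all arcs go from even to odd. -/
def Aalt (n : ℕ) : Fin n → Fin n → Prop :=
  fun u v => (u.val + 1 = v.val ∨ v.val + 1 = u.val) ∧ v.val % 2 = 1

lemma alt_ne {n : ℕ} : ∀ a b : Fin n, Aalt n a b → a ≠ b := by
  intro a b h heq
  subst heq
  obtain ⟨hc, -⟩ := h
  omega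

lemma alt_walk {n : ℕ} {x y : Fin n} {l : List (Fin n)} (p : DWalk (Aalt n) x y l) :
    (x = y ∧ l = [x]) ∨ (Aalt n x y ∧ l = [x, y]) := by
  cases p with
  | nil => exact Or.inl ⟨rfl, rfl⟩
  | cons h q =>
    cases q with
    | nil => exact Or.inr ⟨h, rfl⟩
    | cons h2 r =>
      exfalso
      obtain ⟨hc, hv⟩ := h
      obtain ⟨hc2, hv2⟩ := h2
      omega

lemma alt_monitors {n : ℕ} {x y a b : Fin n} (hxy : x ≠ y)
    (h : Monitors (Aalt n) x y a b) : (a = x ∧ b = y) ∨ (a = y ∧ b = x) := by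
  have key : ∀ u w : Fin n, u ≠ w →
      ((∃ l, IsShortest (Aalt n) u w l) ∧ ∀ l, IsShortest (Aalt n) u w l → ArcOn a b l) →
      a = u ∧ b = w := by
    rintro u w huw ⟨⟨l, hl, hmin⟩, hall⟩
    rcases alt_walk hl with ⟨heq, -⟩ | ⟨harc, hpair⟩
    · exact absurd heq huw
    · obtain ⟨l₁, l₂, h12⟩ := hall l ⟨hl, hmin⟩
      rw [hpair] at h12
      have hlen := congrArg List.length h12
      simp at hlen
      have hl1 : l₁ = [] := List.length_eq_zero_iff.mp (by omega)
      have hl2 : l₂ = [] := List.length_eq_zero_iff.mp (by omega)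
      rw [hl1, hl2] at h12
      simp at h12
      exact ⟨h12.1.symm, h12.2.symm⟩
  rcases h with hc | hc
  · exact Or.inl (key x y hxy hc)
  · obtain ⟨ha, hb⟩ := key y x hxy.symm hc
    exact Or.inr ⟨ha, hb⟩

lemma alt_mag {n : ℕ} (hn : 2 ≤ n) : mag (Aalt n) = n := by
  apply le_antisymm
  · exact le_of_le_of_eq (mag_le_card alt_ne) (Fintype.card_fin n)
  · unfold mag
    apply le_csInf
    · exact ⟨Fintype.card (Fin n), Finset.univ, isMAGSet_univ alt_ne, Finset.card_univ⟩
    rintro m ⟨M, hM, rfl⟩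
    have hend : ∀ a b : Fin n, Aalt n a b → a ∈ M ∧ b ∈ M := by
      intro a b h
      obtain ⟨x, hx, y, hy, hxy, hmon⟩ := hM a b h
      rcases alt_monitors hxy hmon with ⟨rfl, rfl⟩ | ⟨rfl, rfl⟩
      · exact ⟨hx, hy⟩
      · exact ⟨hy, hx⟩
    have hall : ∀ v : Fin n, v ∈ M := by
      intro v
      by_cases hv : v.val + 1 < n
      · have h2 : Aalt n v ⟨v.val + 1, hv⟩ ∨ Aalt n ⟨v.val + 1, hv⟩ v := by
          rcases Nat.even_or_odd v.val with he | ho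
          · have he' := Nat.even_iff.mp he
            exact Or.inl ⟨Or.inl rfl, by simp only [Fin.val_mk]; omega⟩
          · exact Or.inr ⟨Or.inr rfl, Nat.odd_iff.mp ho⟩
        rcases h2 with h | h
        · exact (hend _ _ h).1
        · exact (hend _ _ h).2
      · have hv1 : 1 ≤ v.val := by have := v.isLt; omega
        have hu : v.val - 1 < n := by omega
        have h2 : Aalt n v ⟨v.val - 1, hu⟩ ∨ Aalt n ⟨v.val - 1, hu⟩ v := by
          rcases Nat.even_or_odd v.val with he | ho
          · have he' := Nat.even_iff.mp he
            exact Or.inl ⟨Or.inr (by simp only [Fin.val_mk]; omega),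
              by simp only [Fin.val_mk]; omega⟩
          · exact Or.inr ⟨Or.inl (by simp only [Fin.val_mk]; omega), Nat.odd_iff.mp ho⟩
        rcases h2 with h | h
        · exact (hend _ _ h).1
        · exact (hend _ _ h).2
    calc n = (Finset.univ : Finset (Fin n)).card := by simp
    _ ≤ M.card := Finset.card_le_card fun x _ => hall x

lemma fwd_orientation {n : ℕ} : IsOrientation (SimpleGraph.pathGraph n) (Afwd n) := by
  constructor
  · intro u v
    rw [SimpleGraph.pathGraph_adj]
    simp only [Afwd]
  · intro u v h h'
    simp only [Afwd] at h h'
    omega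

lemma alt_orientation {n : ℕ} : IsOrientation (SimpleGraph.pathGraph n) (Aalt n) := by
  constructor
  · intro u v
    rw [SimpleGraph.pathGraph_adj]
    simp only [Aalt]
    omega
  · intro u v h h'
    simp only [Aalt] at h h'
    omega

end Helpers


/-- for the path graph on `n ≥ 2` vertices,
`mag⁻(P_n) = 2` and `mag⁺(P_n) = n`. -/
theorem pathGraph_magMinus_magPlus (n : ℕ) (hn : 2 ≤ n) :
    magMinus (SimpleGraph.pathGraph n) = 2 ∧
    magPlus (SimpleGraph.pathGraph n) = n := by
  have h0 : (0 : ℕ) < n := by omega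
  have h1 : (1 : ℕ) < n := by omega
  have hub : ∀ m ∈ {k | ∃ A : Fin n → Fin n → Prop,
      IsOrientation (SimpleGraph.pathGraph n) A ∧ mag A = k}, m ≤ n := by
    rintro m ⟨A, hA, rfl⟩
    have hne : ∀ a b : Fin n, A a b → a ≠ b := fun a b h =>
      ((hA.adj_iff a b).mpr (Or.inl h)).ne
    exact le_of_le_of_eq (mag_le_card hne) (Fintype.card_fin n)
  constructor
  · unfold magMinus
    apply le_antisymm
    · exact Nat.sInf_le ⟨Afwd n, fwd_orientation, fwd_mag hn⟩
    · apply le_csInf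
      · exact ⟨2, Afwd n, fwd_orientation, fwd_mag hn⟩
      rintro m ⟨A, hA, rfl⟩
      have hne : ∀ a b : Fin n, A a b → a ≠ b := fun a b h =>
        ((hA.adj_iff a b).mpr (Or.inl h)).ne
      have hadj : (SimpleGraph.pathGraph n).Adj ⟨0, h0⟩ ⟨1, h1⟩ := by
        rw [SimpleGraph.pathGraph_adj]; left; rfl
      rcases (hA.adj_iff _ _).mp hadj with h | h
      · exact two_le_mag hne h
      · exact two_le_mag hne h
  · unfold magPlus
    apply le_antisymm
    · exact csSup_le ⟨n, Aalt n, alt_orientation, alt_mag hn⟩ hub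
    · exact le_csSup ⟨n, hub⟩ ⟨Aalt n, alt_orientation, alt_mag hn⟩

end MAG
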